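/- (Lipschitz bound for the approximate unstable-leaf maps Ψ^j.) For every j ≥ 1 and all y₁, y₂ ∈ Y one has ‖Ψ^j(y₁) − Ψ^j(y₂)‖ ≤ (δ/(σ−α)) · (1/(1−κ)) · ‖y₁ − y₂‖. -/

import Mathlib

open MeasureTheory

noncomputable section

variable {X Y : Type*} [NormedAddCommGroup X] [NormedSpace ℝ X] [CompleteSpace X]
  [NormedAddCommGroup Y] [NormedSpace ℝ Y] [CompleteSpace Y]

/-- The weighted sup-norm `‖ψ‖_σ = sup_{t ≤ 0} e^{-σ t} ‖ψ t‖` on `(-∞,0]`. -/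
noncomputable def normSigmaNeg {E : Type*} [NormedAddCommGroup E] (σ : ℝ) (ψ : ℝ → E) : ℝ :=
  sSup {r : ℝ | ∃ t : ℝ, t ≤ 0 ∧ r = Real.exp (-(σ * t)) * ‖ψ t‖}

/-- Membership in the Banach space `G_σ` of continuous functions on `(-∞,0]` with
finite weighted sup-norm. -/
def memGsigma {E : Type*} [NormedAddCommGroup E] (σ : ℝ) (ψ : ℝ → E) : Prop :=
  ContinuousOn ψ (Set.Iic 0) ∧
    BddAbove {r : ℝ | ∃ t : ℝ, t ≤ 0 ∧ r = Real.exp (-(σ * t)) * ‖ψ t‖}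

/-- The Lyapunov–Perron map `U(ψ, y)` for the inertial manifold (unstable leaf): the
`X`-component is `∫_{−∞}^t e^{(t−s)A} F(ψ(s)) ds` and the `Y`-component is
`e^{tB} y − ∫_t^0 e^{(t−s)B} G(ψ(s)) ds`. -/
noncomputable def Umap (A : X →L[ℝ] X) (B : Y →L[ℝ] Y)
    (F : X × Y → X) (G : X × Y → Y) (ψ : ℝ → X × Y) (y : Y) (t : ℝ) : X × Y :=
  (∫ s in Set.Iic t, NormedSpace.exp ((t - s) • A) (F (ψ s)),
    NormedSpace.exp (t • B) y -
      ∫ s in t..(0:ℝ), NormedSpace.exp ((t - s) • B) (G (ψ s)))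

/-- The iterates `ψ⁰(y)(t) = (0, e^{βt} y)`, `ψ^{j+1}(y) = U(ψ^j(y), y)`. -/
noncomputable def psiIter (A : X →L[ℝ] X) (B : Y →L[ℝ] Y)
    (F : X × Y → X) (G : X × Y → Y) (β : ℝ) :
    ℕ → Y → ℝ → X × Y
  | 0 => fun y t => ((0 : X), Real.exp (β * t) • y)
  | j + 1 => fun y => Umap A B F G (psiIter A B F G β j y) y

section Helpers

open Set Real Filter

private lemma intervalExpMul {c : ℝ} (hc : c ≠ 0) (a b : ℝ) :
    ∫ s in a..b, Real.exp (c * s) = (Real.exp (c * b) - Real.exp (c * a)) / c := by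
  rw [intervalIntegral.integral_comp_mul_left (fun x => Real.exp x) hc, integral_exp,
    smul_eq_mul, inv_mul_eq_div]

private lemma expMulIntegrableOnIic {c : ℝ} (hc : 0 < c) (t : ℝ) :
    IntegrableOn (fun s : ℝ => Real.exp (c * s)) (Set.Iic t) := by
  refine integrableOn_Iic_of_intervalIntegral_norm_bounded (Real.exp (c * t) / c) t
    (fun i => ((Real.continuous_exp.comp (continuous_const.mul continuous_id)).integrableOn_Ioc))
    tendsto_id ?_
  filter_upwards with i
  simp only [id_eq]
  have h : ∀ x : ℝ, ‖Real.exp (c * x)‖ = Real.exp (c * x) := fun x =>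
    Real.norm_of_nonneg (Real.exp_pos _).le
  have heq : (∫ x in i..t, ‖Real.exp (c * x)‖) = (Real.exp (c * t) - Real.exp (c * i)) / c := by
    simp only [h]; exact intervalExpMul hc.ne' i t
  rw [heq]
  have h1 := (Real.exp_pos (c * i)).le
  have h2 := Real.exp_pos (c * t)
  gcongr
  linarith

private lemma expMulIntegralIic {c : ℝ} (hc : 0 < c) (t : ℝ) :
    ∫ s in Set.Iic t, Real.exp (c * s) = Real.exp (c * t) / c := by
  refine tendsto_nhds_unique
    (intervalIntegral_tendsto_integral_Iic t (expMulIntegrableOnIic hc t) tendsto_id) ?_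
  have h1 : Tendsto (fun i : ℝ => Real.exp (c * i)) atBot (nhds 0) :=
    Real.tendsto_exp_atBot.comp (Tendsto.const_mul_atBot hc tendsto_id)
  have h2 : Tendsto (fun i : ℝ => (Real.exp (c * t) - Real.exp (c * i)) / c) atBot
      (nhds (Real.exp (c * t) / c)) := by
    simpa using (tendsto_const_nhds.sub h1).div_const c
  exact h2.congr fun i => (intervalExpMul hc.ne' i t).symm

set_option synthInstance.maxHeartbeats 1000000 in
set_option maxHeartbeats 1000000 in
private lemma expSmulAddApply {E : Type*} [NormedAddCommGroup E] [NormedSpace ℝ E]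
    [CompleteSpace E] (A : E →L[ℝ] E) (a b : ℝ) (x : E) :
    NormedSpace.exp ((a + b) • A) x
      = NormedSpace.exp (a • A) (NormedSpace.exp (b • A) x) := by
  have hc : Commute (a • A) (b • A) := by
    unfold Commute SemiconjBy
    rw [smul_mul_assoc, mul_smul_comm, smul_mul_assoc, mul_smul_comm, smul_smul, smul_smul,
      mul_comm a b]
  let +nondep : NormedAlgebra ℚ (E →L[ℝ] E) := .restrictScalars ℚ ℝ _
  rw [add_smul, NormedSpace.exp_add_of_commute hc]
  rfl

private lemma expSmulSubApply {E : Type*} [NormedAddCommGroup E] [NormedSpace ℝ E]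
    [CompleteSpace E] (A : E →L[ℝ] E) (a b : ℝ) (x : E) :
    NormedSpace.exp ((a - b) • A) x
      = NormedSpace.exp (a • A) (NormedSpace.exp ((-b) • A) x) := by
  rw [sub_eq_add_neg, expSmulAddApply]

end Helpers

set_option maxHeartbeats 2000000 in
set_option synthInstance.maxHeartbeats 1000000 in
/-- **Lipschitz bound for the approximate unstable-leaf maps Ψ^j.** -/
theorem approximate_unstable_leaf_lipschitz
    {X Y : Type*} [NormedAddCommGroup X] [NormedSpace ℝ X] [CompleteSpace X]
    [NormedAddCommGroup Y] [NormedSpace ℝ Y] [CompleteSpace Y]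
(A : X →L[ℝ] X) (B : Y →L[ℝ] Y) (α β δ σ κ : ℝ)
    (F : X × Y → X) (G : X × Y → Y)
    (hA : ∀ t : ℝ, 0 ≤ t → ‖NormedSpace.exp (t • A)‖ ≤ Real.exp (α * t))
    (hB : ∀ t : ℝ, 0 ≤ t → ‖NormedSpace.exp ((-t) • B)‖ ≤ Real.exp (-(β * t)))
    (hδ : 0 ≤ δ)
    (hLip : ∀ w₁ w₂ : X × Y, ‖((F w₁, G w₁) : X × Y) - (F w₂, G w₂)‖ ≤ δ * ‖w₁ - w₂‖)
    (hH0 : ((F 0, G 0) : X × Y) = 0)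
    (hgap : 2 * δ < β - α)
    (hσ : σ ∈ Set.Ioo (α + δ) (β - δ))
    (hκ : κ = max (δ / (β - σ)) (δ / (σ - α))) :
    ∀ j : ℕ, 1 ≤ j → ∀ y₁ y₂ : Y,
      ‖(psiIter A B F G β j y₁ 0).1 - (psiIter A B F G β j y₂ 0).1‖
        ≤ δ / (σ - α) * (1 / (1 - κ)) * ‖y₁ - y₂‖ := by
  -- basic constants
  obtain ⟨hσ1, hσ2⟩ := hσ
  have hσα : 0 < σ - α := by linarith
  have hβσ : 0 < β - σ := by linarith
  have hσβ : σ ≤ β := by linarith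
  have hκ0 : 0 ≤ κ := by
    rw [hκ]; exact le_trans (div_nonneg hδ hβσ.le) (le_max_left _ _)
  have hκ1 : κ < 1 := by
    rw [hκ]
    exact max_lt ((div_lt_one hβσ).mpr (by linarith)) ((div_lt_one hσα).mpr (by linarith))
  have h1κ : 0 < 1 - κ := by linarith
  set C : ℝ := 1 / (1 - κ) with hCdef
  have hC1 : 1 ≤ C := by rw [hCdef, le_div_iff₀ h1κ]; linarith
  have hC0 : 0 < C := lt_of_lt_of_le zero_lt_one hC1
  have hCκ : C * (1 - κ) = 1 := by rw [hCdef]; field_simp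
  have hκC : κ * C + 1 = C := by nlinarith [hCκ]
  have hδσκ : δ / (σ - α) ≤ κ := by rw [hκ]; exact le_max_right _ _
  have hδβκ : δ / (β - σ) ≤ κ := by rw [hκ]; exact le_max_left _ _
  -- component facts about F, G
  have hF0 : F 0 = 0 := congrArg Prod.fst hH0
  have hG0 : G 0 = 0 := congrArg Prod.snd hH0
  have hFd : ∀ w₁ w₂ : X × Y, ‖F w₁ - F w₂‖ ≤ δ * ‖w₁ - w₂‖ := by
    intro w₁ w₂
    refine le_trans ?_ (hLip w₁ w₂)
    exact norm_fst_le (((F w₁, G w₁) : X × Y) - (F w₂, G w₂))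
  have hGd : ∀ w₁ w₂ : X × Y, ‖G w₁ - G w₂‖ ≤ δ * ‖w₁ - w₂‖ := by
    intro w₁ w₂
    refine le_trans ?_ (hLip w₁ w₂)
    exact norm_snd_le (((F w₁, G w₁) : X × Y) - (F w₂, G w₂))
  have hFb : ∀ w : X × Y, ‖F w‖ ≤ δ * ‖w‖ := by
    intro w; simpa [hF0] using hFd w 0
  have hGb : ∀ w : X × Y, ‖G w‖ ≤ δ * ‖w‖ := by
    intro w; simpa [hG0] using hGd w 0
  have hFc : Continuous F := by
    refine (LipschitzWith.of_dist_le_mul (K := δ.toNNReal) fun a b => ?_).continuous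
    rw [dist_eq_norm, dist_eq_norm, Real.coe_toNNReal δ hδ]
    exact hFd a b
  have hGc : Continuous G := by
    refine (LipschitzWith.of_dist_le_mul (K := δ.toNNReal) fun a b => ?_).continuous
    rw [dist_eq_norm, dist_eq_norm, Real.coe_toNNReal δ hδ]
    exact hGd a b
  -- operator norm facts
  have hBop : ∀ u : ℝ, u ≤ 0 → ‖NormedSpace.exp (u • B)‖ ≤ Real.exp (β * u) := by
    intro u hu
    have := hB (-u) (by linarith)
    simpa [neg_neg, mul_neg] using this
  -- continuity of exponentials
  let +nondep : NormedAlgebra ℚ (X →L[ℝ] X) := .restrictScalars ℚ ℝ _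
  let +nondep : NormedAlgebra ℚ (Y →L[ℝ] Y) := .restrictScalars ℚ ℝ _
  have hexpAt : Continuous fun t : ℝ => NormedSpace.exp (t • A) :=
    NormedSpace.exp_continuous.comp (continuous_id.smul continuous_const)
  have hexpBt : Continuous fun t : ℝ => NormedSpace.exp (t • B) :=
    NormedSpace.exp_continuous.comp (continuous_id.smul continuous_const)
  have hexpAc : ∀ c : ℝ, Continuous fun s : ℝ => NormedSpace.exp ((c - s) • A) :=
    fun c => NormedSpace.exp_continuous.comp ((continuous_const.sub continuous_id).smul
      continuous_const)
  have hexpBc : ∀ c : ℝ, Continuous fun s : ℝ => NormedSpace.exp ((c - s) • B) :=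
    fun c => NormedSpace.exp_continuous.comp ((continuous_const.sub continuous_id).smul
      continuous_const)
  have hexpAnegs : Continuous fun s : ℝ => NormedSpace.exp ((-s) • A) :=
    NormedSpace.exp_continuous.comp (continuous_id.neg.smul continuous_const)
  have hexpBnegs : Continuous fun s : ℝ => NormedSpace.exp ((-s) • B) :=
    NormedSpace.exp_continuous.comp (continuous_id.neg.smul continuous_const)
  -- measurability of integrands built from an a.e.s.m. curve
  have measA : ∀ (ψ : ℝ → X × Y) (μ : Measure ℝ),
      AEStronglyMeasurable ψ μ → ∀ c : ℝ,
      AEStronglyMeasurable (fun s => NormedSpace.exp ((c - s) • A) (F (ψ s))) μ := by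
    intro ψ μ hm c
    have h1 : AEStronglyMeasurable (fun s => F (ψ s)) μ := hFc.comp_aestronglyMeasurable hm
    exact isBoundedBilinearMap_apply.continuous.comp_aestronglyMeasurable
      (((hexpAc c).aestronglyMeasurable).prodMk h1)
  have measB : ∀ (ψ : ℝ → X × Y) (μ : Measure ℝ),
      AEStronglyMeasurable ψ μ → ∀ c : ℝ,
      AEStronglyMeasurable (fun s => NormedSpace.exp ((c - s) • B) (G (ψ s))) μ := by
    intro ψ μ hm c
    have h1 : AEStronglyMeasurable (fun s => G (ψ s)) μ := hGc.comp_aestronglyMeasurable hm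
    exact isBoundedBilinearMap_apply.continuous.comp_aestronglyMeasurable
      (((hexpBc c).aestronglyMeasurable).prodMk h1)
  have hrestr : ∀ t : ℝ, t ≤ 0 →
      (volume : Measure ℝ).restrict (Set.Iic t) ≤ (volume : Measure ℝ).restrict (Set.Iic 0) :=
    fun t ht => Measure.restrict_mono (Set.Iic_subset_Iic.mpr ht) le_rfl
  -- integrability of the A-side integrand
  have intA : ∀ (ψ : ℝ → X × Y) (M : ℝ),
      AEStronglyMeasurable ψ ((volume : Measure ℝ).restrict (Set.Iic 0)) →
      (∀ s : ℝ, s ≤ 0 → ‖ψ s‖ ≤ M * Real.exp (σ * s)) →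
      ∀ (c t : ℝ), t ≤ 0 → t ≤ c →
      IntegrableOn (fun s => NormedSpace.exp ((c - s) • A) (F (ψ s))) (Set.Iic t) := by
    intro ψ M hm hg c t ht htc
    have hmt : AEStronglyMeasurable ψ ((volume : Measure ℝ).restrict (Set.Iic t)) :=
      hm.mono_measure (hrestr t ht)
    refine Integrable.mono' ((expMulIntegrableOnIic hσα t).const_mul
      (δ * M * Real.exp (α * c))) (measA ψ _ hmt c) ?_
    refine (ae_restrict_iff' measurableSet_Iic).mpr (Filter.Eventually.of_forall ?_)
    intro s hs
    simp only [Set.mem_Iic] at hs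
    have h1 : ‖NormedSpace.exp ((c - s) • A) (F (ψ s))‖
        ≤ ‖NormedSpace.exp ((c - s) • A)‖ * ‖F (ψ s)‖ := ContinuousLinearMap.le_opNorm _ _
    have h2 : ‖NormedSpace.exp ((c - s) • A)‖ ≤ Real.exp (α * (c - s)) :=
      hA (c - s) (by linarith)
    have h3 : ‖F (ψ s)‖ ≤ δ * (M * Real.exp (σ * s)) := by
      refine le_trans (hFb (ψ s)) ?_
      exact mul_le_mul_of_nonneg_left (hg s (le_trans hs ht)) hδ
    have h4 : 0 ≤ ‖F (ψ s)‖ := norm_nonneg _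
    have h5 : ‖NormedSpace.exp ((c - s) • A) (F (ψ s))‖
        ≤ Real.exp (α * (c - s)) * (δ * (M * Real.exp (σ * s))) :=
      le_trans h1 (mul_le_mul h2 h3 h4 (Real.exp_pos _).le)
    refine le_trans h5 (le_of_eq ?_)
    have hxp : Real.exp (α * (c - s)) * Real.exp (σ * s)
        = Real.exp (α * c) * Real.exp ((σ - α) * s) := by
      rw [← Real.exp_add, ← Real.exp_add]; ring_nf
    calc Real.exp (α * (c - s)) * (δ * (M * Real.exp (σ * s)))
        = δ * M * (Real.exp (α * (c - s)) * Real.exp (σ * s)) := by ring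
      _ = δ * M * (Real.exp (α * c) * Real.exp ((σ - α) * s)) := by rw [hxp]
      _ = δ * M * Real.exp (α * c) * Real.exp ((σ - α) * s) := by ring
  -- interval integrability of the B-side integrand
  have intB : ∀ (ψ : ℝ → X × Y) (M : ℝ),
      AEStronglyMeasurable ψ ((volume : Measure ℝ).restrict (Set.Iic 0)) →
      (∀ s : ℝ, s ≤ 0 → ‖ψ s‖ ≤ M * Real.exp (σ * s)) →
      ∀ (c t : ℝ), t ≤ 0 →
      IntegrableOn (fun s => NormedSpace.exp ((c - s) • B) (G (ψ s))) (Set.Ioc t 0) := by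
    intro ψ M hm hg c t ht
    have hsub : Set.Ioc t 0 ⊆ Set.Iic (0 : ℝ) := fun x hx => hx.2
    have hmt : AEStronglyMeasurable ψ ((volume : Measure ℝ).restrict (Set.Ioc t 0)) :=
      hm.mono_measure (Measure.restrict_mono hsub le_rfl)
    have hφc : Continuous fun s : ℝ =>
        ‖NormedSpace.exp ((c - s) • B)‖ * (δ * M * Real.exp (σ * s)) :=
      ((hexpBc c).norm).mul (continuous_const.mul
        (Real.continuous_exp.comp (continuous_const.mul continuous_id)))
    refine Integrable.mono' (hφc.integrableOn_Ioc) (measB ψ _ hmt c) ?_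
    refine (ae_restrict_iff' measurableSet_Ioc).mpr (Filter.Eventually.of_forall ?_)
    intro s hs
    have h1 : ‖NormedSpace.exp ((c - s) • B) (G (ψ s))‖
        ≤ ‖NormedSpace.exp ((c - s) • B)‖ * ‖G (ψ s)‖ := ContinuousLinearMap.le_opNorm _ _
    have h3 : ‖G (ψ s)‖ ≤ δ * M * Real.exp (σ * s) := by
      refine le_trans (hGb (ψ s)) ?_
      rw [mul_assoc]
      exact mul_le_mul_of_nonneg_left (hg s hs.2) hδ
    exact le_trans h1 (mul_le_mul_of_nonneg_left h3 (norm_nonneg _))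
  -- X-component estimate for one application of Umap
  have keyX : ∀ (ψ₁ ψ₂ : ℝ → X × Y) (M₁ M₂ D : ℝ) (y₁ y₂ : Y) (t : ℝ), t ≤ 0 → 0 ≤ D →
      AEStronglyMeasurable ψ₁ ((volume : Measure ℝ).restrict (Set.Iic 0)) →
      AEStronglyMeasurable ψ₂ ((volume : Measure ℝ).restrict (Set.Iic 0)) →
      (∀ s : ℝ, s ≤ 0 → ‖ψ₁ s‖ ≤ M₁ * Real.exp (σ * s)) →
      (∀ s : ℝ, s ≤ 0 → ‖ψ₂ s‖ ≤ M₂ * Real.exp (σ * s)) →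
      (∀ s : ℝ, s ≤ 0 → ‖ψ₁ s - ψ₂ s‖ ≤ D * Real.exp (σ * s)) →
      ‖(Umap A B F G ψ₁ y₁ t).1 - (Umap A B F G ψ₂ y₂ t).1‖
        ≤ δ / (σ - α) * D * Real.exp (σ * t) := by
    intro ψ₁ ψ₂ M₁ M₂ D y₁ y₂ t ht hD hm₁ hm₂ hg₁ hg₂ hd
    have hi₁ := intA ψ₁ M₁ hm₁ hg₁ t t ht le_rfl
    have hi₂ := intA ψ₂ M₂ hm₂ hg₂ t t ht le_rfl
    have hsub : (Umap A B F G ψ₁ y₁ t).1 - (Umap A B F G ψ₂ y₂ t).1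
        = ∫ s in Set.Iic t, (NormedSpace.exp ((t - s) • A) (F (ψ₁ s))
            - NormedSpace.exp ((t - s) • A) (F (ψ₂ s))) := by
      simp only [Umap]
      exact (integral_sub hi₁ hi₂).symm
    rw [hsub]
    have hbound : ∀ᵐ s ∂((volume : Measure ℝ).restrict (Set.Iic t)),
        ‖NormedSpace.exp ((t - s) • A) (F (ψ₁ s))
          - NormedSpace.exp ((t - s) • A) (F (ψ₂ s))‖
        ≤ δ * D * Real.exp (α * t) * Real.exp ((σ - α) * s) := by
      refine (ae_restrict_iff' measurableSet_Iic).mpr (Filter.Eventually.of_forall ?_)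
      intro s hs
      simp only [Set.mem_Iic] at hs
      have e1 : NormedSpace.exp ((t - s) • A) (F (ψ₁ s))
          - NormedSpace.exp ((t - s) • A) (F (ψ₂ s))
          = NormedSpace.exp ((t - s) • A) (F (ψ₁ s) - F (ψ₂ s)) := (map_sub _ _ _).symm
      rw [e1]
      have h1 := ContinuousLinearMap.le_opNorm (NormedSpace.exp ((t - s) • A))
        (F (ψ₁ s) - F (ψ₂ s))
      have h2 : ‖NormedSpace.exp ((t - s) • A)‖ ≤ Real.exp (α * (t - s)) :=
        hA (t - s) (by linarith)
      have h3 : ‖F (ψ₁ s) - F (ψ₂ s)‖ ≤ δ * (D * Real.exp (σ * s)) := by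
        refine le_trans (hFd (ψ₁ s) (ψ₂ s)) ?_
        exact mul_le_mul_of_nonneg_left (hd s (le_trans hs ht)) hδ
      have h5 : ‖NormedSpace.exp ((t - s) • A) (F (ψ₁ s) - F (ψ₂ s))‖
          ≤ Real.exp (α * (t - s)) * (δ * (D * Real.exp (σ * s))) :=
        le_trans h1 (mul_le_mul h2 h3 (norm_nonneg _) (Real.exp_pos _).le)
      refine le_trans h5 (le_of_eq ?_)
      have hxp : Real.exp (α * (t - s)) * Real.exp (σ * s)
          = Real.exp (α * t) * Real.exp ((σ - α) * s) := by
        rw [← Real.exp_add, ← Real.exp_add]; ring_nf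
      calc Real.exp (α * (t - s)) * (δ * (D * Real.exp (σ * s)))
          = δ * D * (Real.exp (α * (t - s)) * Real.exp (σ * s)) := by ring
        _ = δ * D * (Real.exp (α * t) * Real.exp ((σ - α) * s)) := by rw [hxp]
        _ = δ * D * Real.exp (α * t) * Real.exp ((σ - α) * s) := by ring
    have hgint : Integrable (fun s : ℝ => δ * D * Real.exp (α * t) * Real.exp ((σ - α) * s))
        ((volume : Measure ℝ).restrict (Set.Iic t)) :=
      (expMulIntegrableOnIic hσα t).const_mul _
    refine le_trans (norm_integral_le_of_norm_le hgint hbound) (le_of_eq ?_)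
    have hxp : Real.exp (α * t) * Real.exp ((σ - α) * t) = Real.exp (σ * t) := by
      rw [← Real.exp_add]; ring_nf
    rw [MeasureTheory.integral_const_mul, expMulIntegralIic hσα t,
      show Real.exp (σ * t) = Real.exp (α * t) * Real.exp ((σ - α) * t) from hxp.symm]
    field_simp
  -- Y-component estimate for one application of Umap
  have keyY : ∀ (ψ₁ ψ₂ : ℝ → X × Y) (M₁ M₂ D : ℝ) (y₁ y₂ : Y) (t : ℝ), t ≤ 0 → 0 ≤ D →
      AEStronglyMeasurable ψ₁ ((volume : Measure ℝ).restrict (Set.Iic 0)) →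
      AEStronglyMeasurable ψ₂ ((volume : Measure ℝ).restrict (Set.Iic 0)) →
      (∀ s : ℝ, s ≤ 0 → ‖ψ₁ s‖ ≤ M₁ * Real.exp (σ * s)) →
      (∀ s : ℝ, s ≤ 0 → ‖ψ₂ s‖ ≤ M₂ * Real.exp (σ * s)) →
      (∀ s : ℝ, s ≤ 0 → ‖ψ₁ s - ψ₂ s‖ ≤ D * Real.exp (σ * s)) →
      ‖(Umap A B F G ψ₁ y₁ t).2 - (Umap A B F G ψ₂ y₂ t).2‖
        ≤ Real.exp (β * t) * ‖y₁ - y₂‖ + δ / (β - σ) * D * Real.exp (σ * t) := by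
    intro ψ₁ ψ₂ M₁ M₂ D y₁ y₂ t ht hD hm₁ hm₂ hg₁ hg₂ hd
    have hq₁ : IntervalIntegrable (fun s => NormedSpace.exp ((t - s) • B) (G (ψ₁ s)))
        volume t 0 := by
      rw [intervalIntegrable_iff_integrableOn_Ioc_of_le ht]
      exact intB ψ₁ M₁ hm₁ hg₁ t t ht
    have hq₂ : IntervalIntegrable (fun s => NormedSpace.exp ((t - s) • B) (G (ψ₂ s)))
        volume t 0 := by
      rw [intervalIntegrable_iff_integrableOn_Ioc_of_le ht]
      exact intB ψ₂ M₂ hm₂ hg₂ t t ht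
    have hsub : (Umap A B F G ψ₁ y₁ t).2 - (Umap A B F G ψ₂ y₂ t).2
        = NormedSpace.exp (t • B) (y₁ - y₂)
          - ∫ s in t..(0:ℝ), (NormedSpace.exp ((t - s) • B) (G (ψ₁ s))
              - NormedSpace.exp ((t - s) • B) (G (ψ₂ s))) := by
      simp only [Umap]
      rw [intervalIntegral.integral_sub hq₁ hq₂, map_sub]
      abel
    rw [hsub]
    refine le_trans (norm_sub_le _ _) (add_le_add ?_ ?_)
    · refine le_trans (ContinuousLinearMap.le_opNorm _ _) ?_
      exact mul_le_mul_of_nonneg_right (hBop t ht) (norm_nonneg _)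
    · have hbound : ∀ᵐ s ∂((volume : Measure ℝ).restrict (Set.uIoc t 0)),
          ‖NormedSpace.exp ((t - s) • B) (G (ψ₁ s))
            - NormedSpace.exp ((t - s) • B) (G (ψ₂ s))‖
          ≤ δ * D * Real.exp (β * t) * Real.exp ((σ - β) * s) := by
        refine (ae_restrict_iff' measurableSet_uIoc).mpr (Filter.Eventually.of_forall ?_)
        intro s hs
        rw [Set.uIoc_of_le ht] at hs
        obtain ⟨hs1, hs2⟩ := hs
        have e1 : NormedSpace.exp ((t - s) • B) (G (ψ₁ s))
            - NormedSpace.exp ((t - s) • B) (G (ψ₂ s))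
            = NormedSpace.exp ((t - s) • B) (G (ψ₁ s) - G (ψ₂ s)) := (map_sub _ _ _).symm
        rw [e1]
        have h1 := ContinuousLinearMap.le_opNorm (NormedSpace.exp ((t - s) • B))
          (G (ψ₁ s) - G (ψ₂ s))
        have h2 : ‖NormedSpace.exp ((t - s) • B)‖ ≤ Real.exp (β * (t - s)) :=
          hBop (t - s) (by linarith)
        have h3 : ‖G (ψ₁ s) - G (ψ₂ s)‖ ≤ δ * (D * Real.exp (σ * s)) := by
          refine le_trans (hGd (ψ₁ s) (ψ₂ s)) ?_
          exact mul_le_mul_of_nonneg_left (hd s hs2) hδ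
        have h5 : ‖NormedSpace.exp ((t - s) • B) (G (ψ₁ s) - G (ψ₂ s))‖
            ≤ Real.exp (β * (t - s)) * (δ * (D * Real.exp (σ * s))) :=
          le_trans h1 (mul_le_mul h2 h3 (norm_nonneg _) (Real.exp_pos _).le)
        refine le_trans h5 (le_of_eq ?_)
        have hxp : Real.exp (β * (t - s)) * Real.exp (σ * s)
            = Real.exp (β * t) * Real.exp ((σ - β) * s) := by
          rw [← Real.exp_add, ← Real.exp_add]; ring_nf
        calc Real.exp (β * (t - s)) * (δ * (D * Real.exp (σ * s)))
            = δ * D * (Real.exp (β * (t - s)) * Real.exp (σ * s)) := by ring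
          _ = δ * D * (Real.exp (β * t) * Real.exp ((σ - β) * s)) := by rw [hxp]
          _ = δ * D * Real.exp (β * t) * Real.exp ((σ - β) * s) := by ring
      have hgii : IntervalIntegrable
          (fun s : ℝ => δ * D * Real.exp (β * t) * Real.exp ((σ - β) * s)) volume t 0 :=
        (continuous_const.mul (Real.continuous_exp.comp
          (continuous_const.mul continuous_id))).intervalIntegrable t 0
      refine le_trans (le_trans (intervalIntegral.norm_integral_le_of_norm_le ht
        (by rw [← Set.uIoc_of_le ht]; exact (ae_restrict_iff' measurableSet_uIoc).mp hbound)
        hgii) (le_abs_self _)) ?_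
      have hxp2 : Real.exp (β * t) * Real.exp ((σ - β) * t) = Real.exp (σ * t) := by
        rw [← Real.exp_add]; ring_nf
      have hσβne : σ - β ≠ 0 := by linarith
      have hval : (∫ s in t..(0:ℝ), δ * D * Real.exp (β * t) * Real.exp ((σ - β) * s))
          = δ * D * (Real.exp (σ * t) - Real.exp (β * t)) / (β - σ) := by
        rw [intervalIntegral.integral_const_mul, intervalExpMul hσβne t 0, mul_zero,
          Real.exp_zero]
        field_simp
        rw [mul_comm t σ, mul_comm t (σ - β)]
        linear_combination (δ * D * (σ - β)) * hxp2
      rw [hval]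
      have heσβ : Real.exp (β * t) ≤ Real.exp (σ * t) := Real.exp_le_exp.mpr (by nlinarith)
      rw [abs_of_nonneg (div_nonneg (mul_nonneg (mul_nonneg hδ hD)
        (sub_nonneg.mpr heσβ)) hβσ.le)]
      have hstep : δ * D * (Real.exp (σ * t) - Real.exp (β * t)) / (β - σ)
          ≤ δ * D * Real.exp (σ * t) / (β - σ) := by
        gcongr
        exact sub_le_self _ (Real.exp_pos _).le
      refine le_trans hstep (le_of_eq (by ring))
  -- the main induction
  have key : ∀ j : ℕ,
      (∀ t : ℝ, t ≤ 0 → psiIter A B F G β j 0 t = 0) ∧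
      (∀ y : Y, AEStronglyMeasurable (psiIter A B F G β j y)
        ((volume : Measure ℝ).restrict (Set.Iic 0))) ∧
      (∀ y₁ y₂ : Y, ∀ t : ℝ, t ≤ 0 →
        ‖psiIter A B F G β j y₁ t - psiIter A B F G β j y₂ t‖
          ≤ C * ‖y₁ - y₂‖ * Real.exp (σ * t)) := by
    intro j
    induction j with
    | zero =>
      refine ⟨fun t _ => by simp [psiIter], fun y => ?_, fun y₁ y₂ t ht => ?_⟩
      · exact (continuous_const.prodMk ((Real.continuous_exp.comp
          (continuous_const.mul continuous_id)).smul continuous_const)).aestronglyMeasurable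
      · have hdiff : psiIter A B F G β 0 y₁ t - psiIter A B F G β 0 y₂ t
            = ((0 : X), Real.exp (β * t) • (y₁ - y₂)) := by
          simp [psiIter, smul_sub, Prod.mk_sub_mk]
        rw [hdiff, Prod.norm_def]
        simp only [norm_zero, norm_smul, Real.norm_eq_abs, abs_of_pos (Real.exp_pos _)]
        rw [max_eq_right (mul_nonneg (Real.exp_pos _).le (norm_nonneg _))]
        have h1 : Real.exp (β * t) ≤ Real.exp (σ * t) :=
          Real.exp_le_exp.mpr (mul_le_mul_of_nonpos_right hσβ ht)
        have h2 : Real.exp (β * t) * ‖y₁ - y₂‖ ≤ Real.exp (σ * t) * ‖y₁ - y₂‖ :=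
          mul_le_mul_of_nonneg_right h1 (norm_nonneg _)
        refine le_trans h2 ?_
        calc Real.exp (σ * t) * ‖y₁ - y₂‖ = 1 * (‖y₁ - y₂‖ * Real.exp (σ * t)) := by ring
          _ ≤ C * (‖y₁ - y₂‖ * Real.exp (σ * t)) := mul_le_mul_of_nonneg_right hC1
              (mul_nonneg (norm_nonneg _) (Real.exp_pos _).le)
          _ = C * ‖y₁ - y₂‖ * Real.exp (σ * t) := by ring
    | succ j ih =>
      obtain ⟨ih0, ihm, ihb⟩ := ih
      have hgrow : ∀ y : Y, ∀ s : ℝ, s ≤ 0 →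
          ‖psiIter A B F G β j y s‖ ≤ C * ‖y‖ * Real.exp (σ * s) := by
        intro y s hs
        have h := ihb y 0 s hs
        rw [ih0 s hs, sub_zero, sub_zero] at h
        exact h
      refine ⟨?_, ?_, ?_⟩
      · -- the zero solution stays zero
        intro t ht
        show Umap A B F G (psiIter A B F G β j 0) 0 t = 0
        refine Prod.ext ?_ ?_
        · show (∫ s in Set.Iic t,
              NormedSpace.exp ((t - s) • A) (F (psiIter A B F G β j 0 s))) = (0 : X × Y).1
          rw [show (0 : X × Y).1 = (0 : X) from rfl]
          refine integral_eq_zero_of_ae ?_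
          refine (ae_restrict_iff' measurableSet_Iic).mpr (Filter.Eventually.of_forall ?_)
          intro s hs
          simp only [Set.mem_Iic] at hs
          simp [ih0 s (le_trans hs ht), hF0]
        · show (NormedSpace.exp (t • B) 0 - ∫ s in t..(0:ℝ),
              NormedSpace.exp ((t - s) • B) (G (psiIter A B F G β j 0 s))) = (0 : X × Y).2
          rw [show (0 : X × Y).2 = (0 : Y) from rfl, map_zero]
          have hz : ∀ s ∈ Set.uIcc t (0:ℝ),
              NormedSpace.exp ((t - s) • B) (G (psiIter A B F G β j 0 s)) = 0 := by
            intro s hs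
            rw [Set.uIcc_of_le ht] at hs
            rw [ih0 s hs.2, hG0, map_zero]
          rw [intervalIntegral.integral_congr hz]
          simp
      · -- measurability via continuity on `Iic 0`
        intro y
        set ψ : ℝ → X × Y := psiIter A B F G β j y with hψ
        have hm := ihm y
        have hgy := hgrow y
        set v : ℝ → X := fun s => NormedSpace.exp ((0 - s) • A) (F (ψ s)) with hv
        set w : ℝ → Y := fun s => NormedSpace.exp ((0 - s) • B) (G (ψ s)) with hw
        have hvInt : ∀ t : ℝ, t ≤ 0 → IntegrableOn v (Set.Iic t) :=
          fun t ht => intA ψ (C * ‖y‖) hm hgy 0 t ht ht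
        have hwInt : ∀ t : ℝ, t ≤ 0 → IntegrableOn w (Set.Ioc t 0) :=
          fun t ht => intB ψ (C * ‖y‖) hm hgy 0 t ht
        have hXrep : ∀ t : ℝ, t ≤ 0 → (psiIter A B F G β (j+1) y t).1
            = NormedSpace.exp (t • A) (∫ s in Set.Iic t, v s) := by
          intro t ht
          show (∫ s in Set.Iic t, NormedSpace.exp ((t - s) • A) (F (ψ s)))
            = NormedSpace.exp (t • A) (∫ s in Set.Iic t, v s)
          have h1 : ∀ s : ℝ, NormedSpace.exp ((t - s) • A) (F (ψ s))
              = NormedSpace.exp (t • A) (v s) := by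
            intro s
            rw [hv]
            simp only [zero_sub]
            exact expSmulSubApply A t s (F (ψ s))
          simp only [h1]
          exact ContinuousLinearMap.integral_comp_comm _ (hvInt t ht)
        have hYrep : ∀ t : ℝ, t ≤ 0 → (psiIter A B F G β (j+1) y t).2
            = NormedSpace.exp (t • B) y
              - NormedSpace.exp (t • B) (∫ s in t..(0:ℝ), w s) := by
          intro t ht
          show (NormedSpace.exp (t • B) y - ∫ s in t..(0:ℝ),
              NormedSpace.exp ((t - s) • B) (G (ψ s)))
            = NormedSpace.exp (t • B) y
              - NormedSpace.exp (t • B) (∫ s in t..(0:ℝ), w s)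
          have h1 : ∀ s : ℝ, NormedSpace.exp ((t - s) • B) (G (ψ s))
              = NormedSpace.exp (t • B) (w s) := by
            intro s
            rw [hw]
            simp only [zero_sub]
            exact expSmulSubApply B t s (G (ψ s))
          simp only [h1]
          congr 1
          refine ContinuousLinearMap.intervalIntegral_comp_comm _ ?_
          rw [intervalIntegrable_iff_integrableOn_Ioc_of_le ht]
          exact hwInt t ht
        -- continuity of the primitives
        have hprimv : ContinuousOn (fun t => ∫ s in t..(0:ℝ), v s) (Set.Iic 0) := by
          intro t0 ht0
          rw [Set.mem_Iic] at ht0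
          have hale : t0 - 1 ≤ (0:ℝ) := by linarith
          have hint : IntegrableOn v (Set.uIcc (t0 - 1) 0) := by
            rw [Set.uIcc_of_le hale]
            exact (hvInt 0 le_rfl).mono_set (fun x hx => hx.2)
          have hcont := intervalIntegral.continuousOn_primitive_interval_left hint
          have hmem : Set.uIcc (t0 - 1) 0 ∈ nhdsWithin t0 (Set.Iic 0) := by
            rw [Set.uIcc_of_le hale]
            refine Filter.mem_of_superset (Filter.inter_mem self_mem_nhdsWithin
              (mem_nhdsWithin_of_mem_nhds (isOpen_Ioi.mem_nhds (by linarith : t0 - 1 < t0)))) ?_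
            rintro x ⟨hx1, hx2⟩
            exact ⟨le_of_lt hx2, hx1⟩
          refine ContinuousWithinAt.mono_of_mem_nhdsWithin (hcont t0 ?_) hmem
          rw [Set.uIcc_of_le hale]
          exact ⟨by linarith, ht0⟩
        have hprimw : ContinuousOn (fun t => ∫ s in t..(0:ℝ), w s) (Set.Iic 0) := by
          intro t0 ht0
          rw [Set.mem_Iic] at ht0
          have hale : t0 - 1 ≤ (0:ℝ) := by linarith
          have hint : IntegrableOn w (Set.uIcc (t0 - 1) 0) := by
            rw [Set.uIcc_of_le hale, integrableOn_Icc_iff_integrableOn_Ioc]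
            exact hwInt (t0 - 1) hale
          have hcont := intervalIntegral.continuousOn_primitive_interval_left hint
          have hmem : Set.uIcc (t0 - 1) 0 ∈ nhdsWithin t0 (Set.Iic 0) := by
            rw [Set.uIcc_of_le hale]
            refine Filter.mem_of_superset (Filter.inter_mem self_mem_nhdsWithin
              (mem_nhdsWithin_of_mem_nhds (isOpen_Ioi.mem_nhds (by linarith : t0 - 1 < t0)))) ?_
            rintro x ⟨hx1, hx2⟩
            exact ⟨le_of_lt hx2, hx1⟩
          refine ContinuousWithinAt.mono_of_mem_nhdsWithin (hcont t0 ?_) hmem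
          rw [Set.uIcc_of_le hale]
          exact ⟨by linarith, ht0⟩
        have hIic : ∀ t : ℝ, t ≤ 0 →
            (∫ s in Set.Iic t, v s) = (∫ s in Set.Iic 0, v s) - ∫ s in t..(0:ℝ), v s := by
          intro t ht
          have h := intervalIntegral.integral_Iic_sub_Iic (hvInt t ht) (hvInt 0 le_rfl)
          rw [← h, sub_sub_cancel]
        have hcont1 : ContinuousOn (fun t : ℝ => NormedSpace.exp (t • A)
            ((∫ s in Set.Iic 0, v s) - ∫ s in t..(0:ℝ), v s)) (Set.Iic 0) :=
          (hexpAt.continuousOn).clm_apply (continuousOn_const.sub hprimv)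
        have hcont2 : ContinuousOn (fun t : ℝ => NormedSpace.exp (t • B) y
            - NormedSpace.exp (t • B) (∫ s in t..(0:ℝ), w s)) (Set.Iic 0) := by
          refine ContinuousOn.sub ?_ ?_
          · exact isBoundedBilinearMap_apply.continuous.comp_continuousOn
              ((hexpBt.continuousOn).prodMk continuousOn_const)
          · exact isBoundedBilinearMap_apply.continuous.comp_continuousOn
              ((hexpBt.continuousOn).prodMk hprimw)
        have hcontAll : ContinuousOn (psiIter A B F G β (j+1) y) (Set.Iic 0) := by
          refine ContinuousOn.congr (hcont1.prodMk hcont2) ?_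
          intro t ht
          rw [Set.mem_Iic] at ht
          refine Prod.ext ?_ ?_
          · rw [hXrep t ht, hIic t ht]
          · rw [hYrep t ht]
        exact hcontAll.aestronglyMeasurable measurableSet_Iic
      · -- the contraction estimate
        intro y₁ y₂ t ht
        have hD : (0:ℝ) ≤ C * ‖y₁ - y₂‖ := mul_nonneg hC0.le (norm_nonneg _)
        have hX := keyX (psiIter A B F G β j y₁) (psiIter A B F G β j y₂)
          (C * ‖y₁‖) (C * ‖y₂‖) (C * ‖y₁ - y₂‖) y₁ y₂ t ht hD (ihm y₁) (ihm y₂)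
          (hgrow y₁) (hgrow y₂) (fun s hs => ihb y₁ y₂ s hs)
        have hY := keyY (psiIter A B F G β j y₁) (psiIter A B F G β j y₂)
          (C * ‖y₁‖) (C * ‖y₂‖) (C * ‖y₁ - y₂‖) y₁ y₂ t ht hD (ihm y₁) (ihm y₂)
          (hgrow y₁) (hgrow y₂) (fun s hs => ihb y₁ y₂ s hs)
        rw [norm_prod_le_iff]
        constructor
        · refine le_trans hX ?_
          have h1 : δ / (σ - α) ≤ 1 := le_trans hδσκ hκ1.le
          have h2 : δ / (σ - α) * (C * ‖y₁ - y₂‖) ≤ 1 * (C * ‖y₁ - y₂‖) :=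
            mul_le_mul_of_nonneg_right h1 hD
          calc δ / (σ - α) * (C * ‖y₁ - y₂‖) * Real.exp (σ * t)
              ≤ 1 * (C * ‖y₁ - y₂‖) * Real.exp (σ * t) :=
                mul_le_mul_of_nonneg_right h2 (Real.exp_pos _).le
            _ = C * ‖y₁ - y₂‖ * Real.exp (σ * t) := by ring
        · refine le_trans hY ?_
          have h1 : Real.exp (β * t) ≤ Real.exp (σ * t) :=
          Real.exp_le_exp.mpr (mul_le_mul_of_nonpos_right hσβ ht)
          have h2 : δ / (β - σ) * (C * ‖y₁ - y₂‖) ≤ κ * (C * ‖y₁ - y₂‖) :=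
            mul_le_mul_of_nonneg_right hδβκ hD
          calc Real.exp (β * t) * ‖y₁ - y₂‖ + δ / (β - σ) * (C * ‖y₁ - y₂‖) * Real.exp (σ * t)
              ≤ Real.exp (σ * t) * ‖y₁ - y₂‖ + κ * (C * ‖y₁ - y₂‖) * Real.exp (σ * t) :=
                add_le_add (mul_le_mul_of_nonneg_right h1 (norm_nonneg _))
                  (mul_le_mul_of_nonneg_right h2 (Real.exp_pos _).le)
            _ = (κ * C + 1) * ‖y₁ - y₂‖ * Real.exp (σ * t) := by ring
            _ = C * ‖y₁ - y₂‖ * Real.exp (σ * t) := by rw [hκC]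
  -- conclusion
  intro j hj y₁ y₂
  obtain ⟨k, rfl⟩ : ∃ k, j = k + 1 := ⟨j - 1, (Nat.succ_pred_eq_of_pos hj).symm⟩
  obtain ⟨ih0, ihm, ihb⟩ := key k
  have hgrow : ∀ y : Y, ∀ s : ℝ, s ≤ 0 →
      ‖psiIter A B F G β k y s‖ ≤ C * ‖y‖ * Real.exp (σ * s) := by
    intro y s hs
    have h := ihb y 0 s hs
    rw [ih0 s hs, sub_zero, sub_zero] at h
    exact h
  have hD : (0:ℝ) ≤ C * ‖y₁ - y₂‖ := mul_nonneg hC0.le (norm_nonneg _)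
  have hX := keyX (psiIter A B F G β k y₁) (psiIter A B F G β k y₂)
    (C * ‖y₁‖) (C * ‖y₂‖) (C * ‖y₁ - y₂‖) y₁ y₂ 0 le_rfl hD (ihm y₁) (ihm y₂)
    (hgrow y₁) (hgrow y₂) (fun s hs => ihb y₁ y₂ s hs)
  rw [mul_zero, Real.exp_zero, mul_one] at hX
  refine le_trans hX (le_of_eq ?_)
  rw [hCdef]
  ring
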